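/- arXiv:2003.00734 — 6 statements merged into one kernel-verified Lean document; each statement's English description precedes it below -/
import Mathlib

section
/- Let p ≥ 2 and q = 2^p. For h ∈ F_q^*, let P_h be the (q−1)×(q−1) matrix over F_2, with rows and columns indexed by F_q^*, whose (x, y) entry is 1 if h·x = y and 0 otherwise (the permutation matrix of multiplication by h). Then the number of quadruples (a, b, c, d) ∈ (F_q^*)^4 for which the 2×2 block matrix with blocks (P_a, P_b; P_c, P_d) contains a length-4 cycle equals (q−1)^3. Hence, with the four labels chosen independently and uniformly from F_q^*, the probability p_4 that a length-4 symbol-level cycle results in length-4 bit-level cycles is 1/(q−1). -/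
open Classical

/-- A binary matrix contains a length-4 cycle iff there are two distinct rows and two
distinct columns all four of whose intersection entries equal 1. -/
def HasL4Cycle {R C : Type*} (M : Matrix R C (ZMod 2)) : Prop :=
  ∃ r1 r2 : R, ∃ c1 c2 : C, r1 ≠ r2 ∧ c1 ≠ c2 ∧
    M r1 c1 = 1 ∧ M r1 c2 = 1 ∧ M r2 c1 = 1 ∧ M r2 c2 = 1

/-- The permutation matrix of multiplication by a nonzero element `h` of `F_q`:
entry `(x,y)` is 1 iff `h·x = y`. -/
noncomputable def permMulMat (p : ℕ) (h : {x : GaloisField 2 p // x ≠ 0}) :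
    Matrix {x : GaloisField 2 p // x ≠ 0} {x : GaloisField 2 p // x ≠ 0} (ZMod 2) :=
  Matrix.of fun x y => if h.1 * x.1 = y.1 then 1 else 0

/-- The 2×2 block matrix with blocks `(P_a, P_b; P_c, P_d)`. -/
noncomputable def blockMulMat (p : ℕ) (a b c d : {x : GaloisField 2 p // x ≠ 0}) :
    Matrix (Fin 2 × {x : GaloisField 2 p // x ≠ 0})
      (Fin 2 × {x : GaloisField 2 p // x ≠ 0}) (ZMod 2) :=
  Matrix.of fun rc cc => permMulMat p (![![a, b], ![c, d]] rc.1 cc.1) rc.2 cc.2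

lemma perm_entry (p : ℕ) (h x y : {x : GaloisField 2 p // x ≠ 0}) :
    permMulMat p h x y = 1 ↔ h.1 * x.1 = y.1 := by
  simp only [permMulMat, Matrix.of_apply]
  constructor
  · intro H; by_contra hne; rw [if_neg hne] at H; exact zero_ne_one H
  · intro H; rw [if_pos H]

lemma block_entry (p : ℕ) (a b c d : {x : GaloisField 2 p // x ≠ 0})
    (i k : Fin 2) (x y : {x : GaloisField 2 p // x ≠ 0}) :
    blockMulMat p a b c d (i, x) (k, y) = 1 ↔
      (![![a, b], ![c, d]] i k).1 * x.1 = y.1 := by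
  simp only [blockMulMat, Matrix.of_apply]
  exact perm_entry p _ x y

lemma cross {K : Type*} [Field K] {a b c d x x' y z : K} (hx : x ≠ 0) (hx' : x' ≠ 0)
    (h1 : a * x = y) (h2 : c * x' = y) (h3 : b * x = z) (h4 : d * x' = z) :
    a * d = b * c := by
  apply mul_right_cancel₀ (mul_ne_zero hx hx')
  linear_combination d * x' * h1 - d * x' * h2 + c * x' * h4 - c * x' * h3

lemma cycle_iff (p : ℕ) (a b c d : {x : GaloisField 2 p // x ≠ 0}) :
    HasL4Cycle (blockMulMat p a b c d) ↔ a.1 * d.1 = b.1 * c.1 := by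
  constructor
  · rintro ⟨⟨i, x⟩, ⟨j, x'⟩, ⟨k, y⟩, ⟨l, z⟩, hr, hc, h11, h12, h21, h22⟩
    rw [block_entry] at h11 h12 h21 h22
    fin_cases i <;> fin_cases j <;> fin_cases k <;> fin_cases l <;>
      simp_all [Matrix.cons_val_zero, Matrix.cons_val_one] <;>
      first
      | exact absurd (Subtype.ext h12) hc
      | exact absurd (Subtype.ext (mul_left_cancel₀ a.2 (h11.trans h21.symm))) hr
      | exact absurd (Subtype.ext (mul_left_cancel₀ b.2 (h11.trans h21.symm))) hr
      | exact absurd (Subtype.ext (mul_left_cancel₀ c.2 (h11.trans h21.symm))) hr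
      | exact absurd (Subtype.ext (mul_left_cancel₀ d.2 (h11.trans h21.symm))) hr
      | linear_combination cross x.2 x'.2 h11 h21 h12 h22
      | linear_combination -cross x.2 x'.2 h11 h21 h12 h22

  · intro h
    refine ⟨(0, ⟨1, one_ne_zero⟩), (1, ⟨a.1 * c.1⁻¹, by
        exact mul_ne_zero a.2 (inv_ne_zero c.2)⟩), (0, a), (1, b), by simp, by simp, ?_, ?_, ?_, ?_⟩
    · rw [block_entry]; simp
    · rw [block_entry]; simp
    · rw [block_entry]; simp only [Matrix.cons_val_one, Matrix.cons_val_zero, Matrix.head_cons]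
      have hc : (c : GaloisField 2 p) ≠ 0 := c.2
      field_simp
    · rw [block_entry]; simp only [Matrix.cons_val_one, Matrix.cons_val_zero, Matrix.head_cons]
      have hc : (c : GaloisField 2 p) ≠ 0 := c.2
      field_simp
      linear_combination h

lemma card_nonzero (p : ℕ) (hp : p ≠ 0) :
    Nat.card {x : GaloisField 2 p // x ≠ 0} = 2 ^ p - 1 := by
  haveI : Fact (Nat.Prime 2) := ⟨Nat.prime_two⟩
  rw [Nat.card_congr unitsEquivNeZero.symm, Nat.card_units, GaloisField.card 2 p hp]

noncomputable def quadEquiv (p : ℕ) :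
    {t : {x : GaloisField 2 p // x ≠ 0} × {x : GaloisField 2 p // x ≠ 0} ×
        {x : GaloisField 2 p // x ≠ 0} × {x : GaloisField 2 p // x ≠ 0} //
        t.1.1 * t.2.2.2.1 = t.2.1.1 * t.2.2.1.1} ≃
      {x : GaloisField 2 p // x ≠ 0} × {x : GaloisField 2 p // x ≠ 0} ×
        {x : GaloisField 2 p // x ≠ 0} where
  toFun t := (t.1.1, t.1.2.1, t.1.2.2.1)
  invFun s := ⟨(s.1, s.2.1, s.2.2, ⟨s.2.1.1 * s.2.2.1 * s.1.1⁻¹,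
      mul_ne_zero (mul_ne_zero s.2.1.2 s.2.2.2) (inv_ne_zero s.1.2)⟩), by
    have ha : (s.1 : GaloisField 2 p) ≠ 0 := s.1.2
    field_simp⟩
  left_inv := by
    rintro ⟨⟨a, b, c, d⟩, ht⟩
    apply Subtype.ext
    refine Prod.ext rfl (Prod.ext rfl (Prod.ext rfl ?_))
    apply Subtype.ext
    have ha : (a : GaloisField 2 p) ≠ 0 := a.2
    field_simp
    linear_combination -ht
  right_inv s := rfl

set_option maxHeartbeats 1000000 in
/-- the number of quadruples `(a,b,c,d) ∈ (F_q^*)^4` whose block matrix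
`(P_a, P_b; P_c, P_d)` contains a length-4 cycle is `(q-1)^3`; hence `p_4 = 1/(q-1)`. -/
theorem stmt_1 (p : ℕ) (hp : 2 ≤ p) :
    Nat.card {t : {x : GaloisField 2 p // x ≠ 0} × {x : GaloisField 2 p // x ≠ 0} ×
        {x : GaloisField 2 p // x ≠ 0} × {x : GaloisField 2 p // x ≠ 0} //
        HasL4Cycle (blockMulMat p t.1 t.2.1 t.2.2.1 t.2.2.2)} = (2 ^ p - 1) ^ 3 ∧
    ((Nat.card {t : {x : GaloisField 2 p // x ≠ 0} × {x : GaloisField 2 p // x ≠ 0} ×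
        {x : GaloisField 2 p // x ≠ 0} × {x : GaloisField 2 p // x ≠ 0} //
        HasL4Cycle (blockMulMat p t.1 t.2.1 t.2.2.1 t.2.2.2)} : ℚ)) /
      (((2 ^ p - 1 : ℕ) : ℚ) ^ 4) = 1 / ((2 ^ p - 1 : ℕ) : ℚ) := by
  have hp0 : p ≠ 0 := by omega
  have hkey : Nat.card {t : {x : GaloisField 2 p // x ≠ 0} × {x : GaloisField 2 p // x ≠ 0} ×
        {x : GaloisField 2 p // x ≠ 0} × {x : GaloisField 2 p // x ≠ 0} //
        HasL4Cycle (blockMulMat p t.1 t.2.1 t.2.2.1 t.2.2.2)} = (2 ^ p - 1) ^ 3 := by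
    have e := Nat.card_congr ((Equiv.subtypeEquivRight
        (fun t : {x : GaloisField 2 p // x ≠ 0} × {x : GaloisField 2 p // x ≠ 0} ×
            {x : GaloisField 2 p // x ≠ 0} × {x : GaloisField 2 p // x ≠ 0} =>
          cycle_iff p t.1 t.2.1 t.2.2.1 t.2.2.2)).trans (quadEquiv p))
    refine e.trans ?_
    rw [Nat.card_prod, Nat.card_prod, card_nonzero p hp0]
    ring
  refine ⟨hkey, ?_⟩
  rw [hkey]
  have h3 : 3 ≤ 2 ^ p - 1 := by
    have : 4 ≤ 2 ^ p := by calc 4 = 2 ^ 2 := rfl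
                                _ ≤ 2 ^ p := Nat.pow_le_pow_right (by norm_num) hp
    omega
  have hne : ((2 ^ p - 1 : ℕ) : ℚ) ≠ 0 := by
    have : 0 < 2 ^ p - 1 := by omega
    exact_mod_cast this.ne'
  rw [Nat.cast_pow]
  rw [show (((2 ^ p - 1 : ℕ) : ℚ)) ^ 4 = ((2 ^ p - 1 : ℕ) : ℚ) ^ 3 * ((2 ^ p - 1 : ℕ) : ℚ) by
    ring, ← div_div, div_self (pow_ne_zero 3 hne)]
end

section
/- Let α be a nonempty finite type with decidable equality, and let σ11, σ12, σ21, σ22 be permutations of α. Let M be the binary matrix indexed by Fin 2 × α (rows) and Fin 2 × α (columns) whose ((i,r),(j,c)) entry is 1 iff σ_{ij}(r) = c. Then M contains a length-4 cycle if and only if there exists x ∈ α with σ12(σ11⁻¹(x)) = σ22(σ21⁻¹(x)), i.e., the permutations σ12∘σ11⁻¹ and σ22∘σ21⁻¹ agree at some point. -/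
/-- The 2×2 block matrix of permutation matrices: entry `((i,r),(j,c))` is 1 iff
`σ_{ij} r = c`, where `σ_{00} = σ11`, `σ_{01} = σ12`, `σ_{10} = σ21`, `σ_{11} = σ22`. -/
def permBlockMat {α : Type*} [DecidableEq α] (σ11 σ12 σ21 σ22 : Equiv.Perm α) :
    Matrix (Fin 2 × α) (Fin 2 × α) (ZMod 2) :=
  Matrix.of fun rc cc => if (![![σ11, σ12], ![σ21, σ22]] rc.1 cc.1) rc.2 = cc.2 then 1 else 0

lemma ite_one_zero_eq_one {p : Prop} [Decidable p] :
    (if p then (1 : ZMod 2) else 0) = 1 ↔ p := by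
  split <;> simp_all

lemma key_lemma {α : Type*} (σ11 σ12 σ21 σ22 : Equiv.Perm α) (r1 r2 c1 c2 : α)
    (h11 : σ11 r1 = c1) (h21 : σ21 r2 = c1) (h12 : σ12 r1 = c2) (h22 : σ22 r2 = c2) :
    ∃ x : α, σ12 (σ11⁻¹ x) = σ22 (σ21⁻¹ x) := by
  subst h11
  exact ⟨σ11 r1, by rw [Equiv.Perm.coe_inv, Equiv.symm_apply_apply, ← h21, Equiv.Perm.coe_inv, Equiv.symm_apply_apply,
    h12, h22]⟩

/-- the block matrix of the four permutation matrices contains a length-4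
cycle iff the permutations `σ12 ∘ σ11⁻¹` and `σ22 ∘ σ21⁻¹` agree at some point. -/
theorem stmt_2 {α : Type*} [Fintype α] [DecidableEq α] [Nonempty α]
    (σ11 σ12 σ21 σ22 : Equiv.Perm α) :
    HasL4Cycle (permBlockMat σ11 σ12 σ21 σ22) ↔
      ∃ x : α, σ12 (σ11⁻¹ x) = σ22 (σ21⁻¹ x) := by
  constructor
  · rintro ⟨⟨i, r1⟩, ⟨j, r2⟩, ⟨k, c1⟩, ⟨l, c2⟩, hr, hc, h11, h12, h21, h22⟩
    simp only [permBlockMat, Matrix.of_apply, ite_one_zero_eq_one] at h11 h12 h21 h22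
    fin_cases i <;> fin_cases j <;> fin_cases k <;> fin_cases l <;>
      simp_all [Prod.ext_iff] <;>
      first
      | exact absurd (Equiv.injective _ (h11.trans h21.symm)) hr
      | exact key_lemma _ _ _ _ _ _ _ _ h11 h21 h12 h22
      | exact key_lemma _ _ _ _ _ _ _ _ h12 h22 h11 h21
      | exact key_lemma _ _ _ _ _ _ _ _ h21 h11 h22 h12
      | exact key_lemma _ _ _ _ _ _ _ _ h22 h12 h21 h11
  · rintro ⟨x, hx⟩
    refine ⟨(0, σ11⁻¹ x), (1, σ21⁻¹ x), (0, x), (1, σ12 (σ11⁻¹ x)), by simp, by simp,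
      ?_, ?_, ?_, ?_⟩ <;>
      simp [permBlockMat, ite_one_zero_eq_one, show σ12 (σ11.symm x) = σ22 (σ21.symm x) from hx]
end

section
/- Let p ≥ 2 and q = 2^p. The number of sets S of nonzero vectors of F_2^p with |S| = 2^(p−1) − 1 that do NOT span F_2^p equals q − 1 = 2^p − 1. Consequently, a uniformly random such set spans F_2^p with probability 1 − (q−1)/C(q−1, q/2 − 1). (This is item 2 of Theorem 2: when wt(Ψ^e_j) = q/2 − 1, the symbol x̄_j can be resolved from v^e_j with probability 1 − (q−1)/binom(q−1, q/2−1).) -/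
open Finset

variable {p : ℕ}

/-- dot product functional -/
def dotL (p : ℕ) (w : Fin p → ZMod 2) : (Fin p → ZMod 2) →ₗ[ZMod 2] ZMod 2 :=
  ∑ i, w i • LinearMap.proj i

lemma dotL_apply (w v : Fin p → ZMod 2) : dotL p w v = ∑ i, w i * v i := by
  simp [dotL, LinearMap.proj]

lemma dotL_single (w : Fin p → ZMod 2) (j : Fin p) : dotL p w (Pi.single j 1) = w j := by
  rw [dotL_apply]
  rw [Finset.sum_eq_single j]
  · simp
  · intro i _ hij; simp [Pi.single_apply, hij]
  · simp

lemma dotL_inj : Function.Injective (dotL p) := by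
  intro w w' h
  funext j
  rw [← dotL_single w j, ← dotL_single w' j, h]

lemma eq_dotL (f : (Fin p → ZMod 2) →ₗ[ZMod 2] ZMod 2) :
    f = dotL p (fun i => f (Pi.single i 1)) := by
  refine LinearMap.ext fun v => ?_
  rw [dotL_apply, LinearMap.pi_apply_eq_sum_univ f v]
  refine Finset.sum_congr rfl fun i _ => ?_
  have : (fun j => if i = j then (1 : ZMod 2) else 0) = Pi.single i 1 := by
    funext j; simp [Pi.single_apply, eq_comm]
  rw [this, smul_eq_mul, mul_comm]

lemma dotL_ne_zero {w : Fin p → ZMod 2} (hw : w ≠ 0) : dotL p w ≠ 0 := by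
  intro h
  apply hw
  funext j
  have := dotL_single w j
  rw [h] at this
  simpa using this.symm

lemma card_ker (hp : 1 ≤ p) {f : (Fin p → ZMod 2) →ₗ[ZMod 2] ZMod 2} (hf : f ≠ 0) :
    Nat.card (LinearMap.ker f) = 2 ^ (p - 1) := by
  have hsurj : LinearMap.range f = ⊤ := by
    rcases DFunLike.ne_iff.mp hf with ⟨v, hv⟩
    rw [LinearMap.zero_apply] at hv
    refine (Submodule.eq_top_iff').2 fun x => ?_
    have : f ((x * (f v)⁻¹) • v) = x := by
      rw [map_smul, smul_eq_mul]
      field_simp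
    exact ⟨_, this⟩
  have hrank : Module.finrank (ZMod 2) (LinearMap.ker f) = p - 1 := by
    have h1 := LinearMap.finrank_range_add_finrank_ker f
    rw [hsurj] at h1
    simp only [finrank_top] at h1
    have h2 : Module.finrank (ZMod 2) (ZMod 2) = 1 := Module.finrank_self _
    have h3 : Module.finrank (ZMod 2) (Fin p → ZMod 2) = p := by
      simp [Module.finrank_pi]
    omega
  haveI : Fintype ↥(LinearMap.ker f) := Fintype.ofFinite _
  rw [Nat.card_eq_fintype_card, Module.card_eq_pow_finrank (K := ZMod 2), hrank]
  simp


lemma zmod2_eq {a b : ZMod 2} (h : a = 0 ↔ b = 0) : a = b := by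
  revert h; revert a b; decide

lemma dotL_zero : dotL p 0 = 0 := by
  refine LinearMap.ext fun v => ?_
  rw [dotL_apply]; simp

lemma filter_card (hp : 1 ≤ p) {w : Fin p → ZMod 2} (hw : w ≠ 0) :
    (Finset.univ.filter fun v => dotL p w v = 0).card = 2 ^ (p - 1) := by
  have h1 : Nat.card (LinearMap.ker (dotL p w)) = 2 ^ (p - 1) :=
    card_ker hp (dotL_ne_zero hw)
  rw [← h1]
  have e : {v : Fin p → ZMod 2 // dotL p w v = 0} ≃ LinearMap.ker (dotL p w) :=
    Equiv.subtypeEquivRight (fun v => (LinearMap.mem_ker).symm)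
  rw [Nat.card_congr e.symm, Nat.card_eq_fintype_card, Fintype.card_subtype]

lemma count_nonspanning (hp : 2 ≤ p) :
    Nat.card {S : Finset (Fin p → ZMod 2) //
        (0 : Fin p → ZMod 2) ∉ S ∧ S.card = 2 ^ (p - 1) - 1 ∧
        Submodule.span (ZMod 2) (↑S : Set (Fin p → ZMod 2)) ≠ ⊤} = 2 ^ p - 1 := by
  have hp1 : 1 ≤ p := by omega
  classical
  set T := fun (w : Fin p → ZMod 2) => (Finset.univ.filter fun v => dotL p w v = 0).erase 0
    with hT
  have hzero_mem : ∀ w : Fin p → ZMod 2, (0 : Fin p → ZMod 2) ∈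
      Finset.univ.filter fun v => dotL p w v = 0 := by
    intro w; simp
  have hmemT : ∀ (w v : Fin p → ZMod 2), v ∈ T w ↔ v ≠ 0 ∧ dotL p w v = 0 := by
    intro w v; simp [hT, Finset.mem_erase, and_comm]
  have hcardT : ∀ w : Fin p → ZMod 2, w ≠ 0 → (T w).card = 2 ^ (p - 1) - 1 := by
    intro w hw
    rw [hT]
    rw [Finset.card_erase_of_mem (hzero_mem w), filter_card hp1 hw]
  have hspanT : ∀ w : Fin p → ZMod 2, w ≠ 0 →
      Submodule.span (ZMod 2) (↑(T w) : Set (Fin p → ZMod 2)) ≠ ⊤ := by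
    intro w hw hsp
    have hsub : (↑(T w) : Set (Fin p → ZMod 2)) ⊆ LinearMap.ker (dotL p w) := by
      intro v hv
      rw [Finset.mem_coe, hmemT] at hv
      exact LinearMap.mem_ker.2 hv.2
    have := Submodule.span_le.2 hsub
    rw [hsp, top_le_iff, LinearMap.ker_eq_top] at this
    exact dotL_ne_zero hw this
  let F : {w : Fin p → ZMod 2 // w ≠ 0} → {S : Finset (Fin p → ZMod 2) //
      (0 : Fin p → ZMod 2) ∉ S ∧ S.card = 2 ^ (p - 1) - 1 ∧
      Submodule.span (ZMod 2) (↑S : Set (Fin p → ZMod 2)) ≠ ⊤} :=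
    fun w => ⟨T w.1, by simp [hT], hcardT w.1 w.2, hspanT w.1 w.2⟩
  have hFbij : Function.Bijective F := by
    constructor
    · rintro ⟨w, hw⟩ ⟨w', hw'⟩ h
      have hTeq : T w = T w' := congrArg Subtype.val h
      have hfil : (Finset.univ.filter fun v => dotL p w v = 0)
          = Finset.univ.filter fun v => dotL p w' v = 0 := by
        rw [← Finset.insert_erase (hzero_mem w), ← Finset.insert_erase (hzero_mem w')]
        exact congrArg (insert 0) hTeq
      have : dotL p w = dotL p w' := by
        refine LinearMap.ext fun v => ?_
        apply zmod2_eq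
        constructor
        · intro hv
          have : v ∈ Finset.univ.filter fun v => dotL p w v = 0 := by simp [hv]
          rw [hfil] at this
          simpa using this
        · intro hv
          have : v ∈ Finset.univ.filter fun v => dotL p w' v = 0 := by simp [hv]
          rw [← hfil] at this
          simpa using this
      exact Subtype.ext (dotL_inj this)
    · rintro ⟨S, h0, hcard, hspan⟩
      obtain ⟨f, hf, hker⟩ := Submodule.exists_le_ker_of_lt_top _ hspan.lt_top
      set w := fun i => f (Pi.single i 1) with hwdef
      have hfw : f = dotL p w := eq_dotL f
      have hw : w ≠ 0 := by
        intro h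
        rw [h, dotL_zero] at hfw
        exact hf hfw
      refine ⟨⟨w, hw⟩, ?_⟩
      apply Subtype.ext
      show T w = S
      have hsub : S ⊆ T w := by
        intro v hv
        rw [hmemT]
        refine ⟨fun h => h0 (h ▸ hv), ?_⟩
        have : v ∈ LinearMap.ker f := hker (Submodule.subset_span hv)
        rw [hfw] at this
        exact LinearMap.mem_ker.1 this
      exact (Finset.eq_of_subset_of_card_le hsub
        (by rw [hcardT w hw, hcard])).symm
  rw [← Nat.card_congr (Equiv.ofBijective F hFbij)]
  have : Nat.card {w : Fin p → ZMod 2 // w ≠ 0}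
      = Fintype.card {w : Fin p → ZMod 2 // ¬(w = 0)} := Nat.card_eq_fintype_card
  rw [this, Fintype.card_subtype_compl]
  simp [Fintype.card_subtype_eq]


lemma count_all (p k : ℕ) :
    Nat.card {S : Finset (Fin p → ZMod 2) // (0 : Fin p → ZMod 2) ∉ S ∧ S.card = k}
      = Nat.choose (2 ^ p - 1) k := by
  classical
  rw [Nat.card_eq_fintype_card, Fintype.card_subtype]
  have h : (Finset.univ.filter fun S : Finset (Fin p → ZMod 2) =>
        (0 : Fin p → ZMod 2) ∉ S ∧ S.card = k)
      = (Finset.univ.erase (0 : Fin p → ZMod 2)).powersetCard k := by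
    ext S
    simp [Finset.mem_powersetCard, Finset.subset_erase, Finset.subset_univ, and_comm]
  rw [h, Finset.card_powersetCard, Finset.card_erase_of_mem (Finset.mem_univ _),
    Finset.card_univ]
  congr 2
  simp

lemma nat_card_split {α : Type*} [Fintype α] (P Q : α → Prop) :
    Nat.card {x // P x ∧ Q x} + Nat.card {x // P x ∧ ¬ Q x} = Nat.card {x // P x} := by
  classical
  simp only [Nat.card_eq_fintype_card, Fintype.card_subtype]
  rw [← Finset.card_filter_add_card_filter_not (s := Finset.univ.filter P) (p := Q),
    Finset.filter_filter, Finset.filter_filter]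

/-- the number of sets of `2^(p−1) − 1` nonzero vectors of `F_2^p` that
do not span `F_2^p` equals `2^p − 1`; consequently a uniformly random such set spans
with probability `1 − (q−1)/C(q−1, q/2 − 1)` (item 2 of Theorem 2). -/
theorem stmt_11 (p : ℕ) (hp : 2 ≤ p) :
    Nat.card {S : Finset (Fin p → ZMod 2) //
        (0 : Fin p → ZMod 2) ∉ S ∧ S.card = 2 ^ (p - 1) - 1 ∧
        Submodule.span (ZMod 2) (↑S : Set (Fin p → ZMod 2)) ≠ ⊤} = 2 ^ p - 1 ∧
    ((Nat.card {S : Finset (Fin p → ZMod 2) //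
        (0 : Fin p → ZMod 2) ∉ S ∧ S.card = 2 ^ (p - 1) - 1 ∧
        Submodule.span (ZMod 2) (↑S : Set (Fin p → ZMod 2)) = ⊤} : ℚ)) /
      ((Nat.card {S : Finset (Fin p → ZMod 2) //
        (0 : Fin p → ZMod 2) ∉ S ∧ S.card = 2 ^ (p - 1) - 1} : ℚ))
      = 1 - ((2 ^ p - 1 : ℕ) : ℚ) / ((Nat.choose (2 ^ p - 1) (2 ^ p / 2 - 1) : ℕ) : ℚ) := by
  have hp1 : 1 ≤ p := by omega
  have hpow : 2 ^ p = 2 ^ (p - 1) * 2 := by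
    rw [← pow_succ]; congr 1; omega
  set k := 2 ^ (p - 1) - 1 with hk
  set A := fun S : Finset (Fin p → ZMod 2) =>
    ((0 : Fin p → ZMod 2) ∉ S ∧ S.card = k) with hA
  have e1 : {S : Finset (Fin p → ZMod 2) //
      (0 : Fin p → ZMod 2) ∉ S ∧ S.card = k ∧
      Submodule.span (ZMod 2) (↑S : Set (Fin p → ZMod 2)) = ⊤}
      ≃ {S : Finset (Fin p → ZMod 2) // A S ∧
      Submodule.span (ZMod 2) (↑S : Set (Fin p → ZMod 2)) = ⊤} :=
    Equiv.subtypeEquivRight (fun S => by rw [hA]; tauto)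
  have e2 : {S : Finset (Fin p → ZMod 2) //
      (0 : Fin p → ZMod 2) ∉ S ∧ S.card = k ∧
      Submodule.span (ZMod 2) (↑S : Set (Fin p → ZMod 2)) ≠ ⊤}
      ≃ {S : Finset (Fin p → ZMod 2) // A S ∧
      ¬ Submodule.span (ZMod 2) (↑S : Set (Fin p → ZMod 2)) = ⊤} :=
    Equiv.subtypeEquivRight (fun S => by rw [hA]; tauto)
  have hB := count_nonspanning hp
  have hTot := count_all p k
  have hsplit := nat_card_split A
    (fun S => Submodule.span (ZMod 2) (↑S : Set (Fin p → ZMod 2)) = ⊤)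
  rw [← Nat.card_congr e1, ← Nat.card_congr e2] at hsplit
  rw [hB] at hsplit
  refine ⟨hB, ?_⟩
  rw [Nat.card_congr e1] at hsplit ⊢
  set a := Nat.card {S : Finset (Fin p → ZMod 2) // A S ∧
      Submodule.span (ZMod 2) (↑S : Set (Fin p → ZMod 2)) = ⊤}
  rw [count_all p k]
  have hdiv : 2 ^ p / 2 - 1 = k := by omega
  rw [hdiv]
  have hkle : k ≤ 2 ^ p - 1 := by omega
  have hchoose : 0 < Nat.choose (2 ^ p - 1) k := Nat.choose_pos hkle
  rw [hTot] at hsplit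
  set n := Nat.choose (2 ^ p - 1) k with hn
  have ha : a = n - (2 ^ p - 1) := by omega
  have hBle : 2 ^ p - 1 ≤ n := by omega
  have hnQ : (n : ℚ) ≠ 0 := by
    exact_mod_cast hchoose.ne'
  rw [ha, Nat.cast_sub hBle]
  field_simp
end

section
/- Let p ≥ 2 and q = 2^p. Let Φ be the p×(q−1) matrix over F_2 whose columns φ(0), …, φ(q−2) are the distinct nonzero vectors of F_2^p, and let Ψ be an invertible p×p matrix over F_2. For any p×(q−1) matrix B with B ≼ Φ, define f_ω(B,Ψ) as the (q−1)×(q−1) matrix over F_2 whose (i,j) entry is 1 iff the j-th column of B equals Ψᵀ·φ(i). Then for all B, B′ with B ≼ Φ and B′ ≼ Φ: B′ ≼ B if and only if f_ω(B′,Ψ) ≼ f_ω(B,Ψ). (Second assertion of Lemma 1.) -/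
open Matrix

/-- `A ≼ C`: every column of `A` is either the zero column or equals the
corresponding column of `C`. -/
def ColPrec {m n : ℕ} (A C : Matrix (Fin m) (Fin n) (ZMod 2)) : Prop :=
  ∀ j, (∀ i, A i j = 0) ∨ (∀ i, A i j = C i j)

/-- `f_ω(B,Ψ)`: the `(q−1)×(q−1)` matrix over `F_2` whose `(i,j)` entry is 1 iff the
`j`-th column of `B` equals `Ψᵀ·φ(i)`. -/
def fOmegaB (p : ℕ) (φ : Fin (2 ^ p - 1) → (Fin p → ZMod 2))
    (B : Matrix (Fin p) (Fin (2 ^ p - 1)) (ZMod 2))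
    (Ψ : Matrix (Fin p) (Fin p) (ZMod 2)) :
    Matrix (Fin (2 ^ p - 1)) (Fin (2 ^ p - 1)) (ZMod 2) :=
  Matrix.of fun i j => if (fun i' => B i' j) = Ψᵀ.mulVec (φ i) then 1 else 0

/-- second assertion of Lemma 1: for `B, B′ ≼ Φ` and invertible `Ψ`,
`B′ ≼ B` iff `f_ω(B′,Ψ) ≼ f_ω(B,Ψ)`. -/
theorem stmt_13 (p : ℕ) (hp : 2 ≤ p)
    (φ : Fin (2 ^ p - 1) → (Fin p → ZMod 2))
    (hφinj : Function.Injective φ)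
    (hφ0 : ∀ j, φ j ≠ 0)
    (hφsurj : ∀ v : Fin p → ZMod 2, v ≠ 0 → ∃ j, φ j = v)
    (Ψ : Matrix (Fin p) (Fin p) (ZMod 2)) (hΨ : IsUnit Ψ)
    (B B' : Matrix (Fin p) (Fin (2 ^ p - 1)) (ZMod 2))
    (hB : ColPrec B (Matrix.of fun i j => φ j i))
    (hB' : ColPrec B' (Matrix.of fun i j => φ j i)) :
    ColPrec B' B ↔ ColPrec (fOmegaB p φ B' Ψ) (fOmegaB p φ B Ψ) := by
  have hdet : IsUnit Ψ.det := (Matrix.isUnit_iff_isUnit_det Ψ).mp hΨ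
  have hinj : Function.Injective Ψᵀ.mulVec := by
    intro u v h
    have := congrArg (Ψ⁻¹ᵀ.mulVec) h
    simpa [Matrix.mulVec_mulVec, ← Matrix.transpose_mul,
      Matrix.mul_nonsing_inv _ hdet] using this
  have hne : ∀ i, Ψᵀ.mulVec (φ i) ≠ 0 := by
    intro i h
    exact hφ0 i (hinj (h.trans (Matrix.mulVec_zero _).symm))
  constructor
  · intro h j
    rcases h j with h0 | heq
    · left
      intro i
      simp only [fOmegaB, Matrix.of_apply]
      rw [if_neg]
      intro hc
      exact hne i (hc ▸ funext h0)
    · right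
      intro i
      have hcol : (fun i' => B' i' j) = fun i' => B i' j := funext heq
      simp only [fOmegaB, Matrix.of_apply, hcol]
  · intro h j
    rcases hB' j with h0 | heq
    · left; exact h0
    · right
      have hv : (Ψ⁻¹ᵀ).mulVec (φ j) ≠ 0 := by
        intro hz
        have := congrArg (Ψᵀ.mulVec) hz
        simp only [Matrix.mulVec_mulVec, ← Matrix.transpose_mul,
          Matrix.nonsing_inv_mul _ hdet, Matrix.transpose_one, Matrix.one_mulVec,
          Matrix.mulVec_zero] at this
        exact hφ0 j this
      obtain ⟨i0, hi0⟩ := hφsurj _ hv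
      have hkey : Ψᵀ.mulVec (φ i0) = φ j := by
        rw [hi0]
        simp [Matrix.mulVec_mulVec, ← Matrix.transpose_mul,
          Matrix.nonsing_inv_mul _ hdet]
      have h1 : fOmegaB p φ B' Ψ i0 j = 1 := by
        simp only [fOmegaB, Matrix.of_apply]
        rw [if_pos]
        rw [hkey]
        exact funext heq
      rcases h j with hz | he
      · exact absurd (hz i0) (by rw [h1]; exact one_ne_zero)
      · have h2 : fOmegaB p φ B Ψ i0 j = 1 := (he i0) ▸ h1
        have hBcol : (fun i' => B i' j) = Ψᵀ.mulVec (φ i0) := by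
          by_contra hc
          simp only [fOmegaB, Matrix.of_apply, if_neg hc] at h2
          exact zero_ne_one h2
        intro i
        rw [heq i]
        have := congrFun hBcol i
        rw [this, hkey]
        simp
end

section
/- Let Λ be an M×N binary mother matrix and let Ω be a block matrix whose (i,j) block is a K×K permutation matrix whenever Λ(i,j) = 1 and the zero block whenever Λ(i,j) = 0. If Ω contains a length-4 cycle (rows r1 ≠ r2 and columns c1 ≠ c2 of Ω with all four entries equal to 1), then Λ contains a length-4 symbol-level cycle: there exist block-row indices i1 ≠ i2 and block-column indices j1 ≠ j2 with Λ(i1,j1) = Λ(i1,j2) = Λ(i2,j1) = Λ(i2,j2) = 1. In particular a length-4 bit-level cycle in Ω can only be caused by a length-4 symbol-level cycle in Λ. -/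
/-- The block matrix `Ω` built from a mother matrix `Λ` by replacing each 1 entry
`(i,j)` by the `K×K` permutation matrix of `σ i j` and each 0 entry by the zero block. -/
def blockOmega {M N K : ℕ} (Λ : Matrix (Fin M) (Fin N) (ZMod 2))
    (σ : Fin M → Fin N → Equiv.Perm (Fin K)) :
    Matrix (Fin M × Fin K) (Fin N × Fin K) (ZMod 2) :=
  Matrix.of fun rc cc =>
    if Λ rc.1 cc.1 = 1 ∧ σ rc.1 cc.1 rc.2 = cc.2 then 1 else 0

/-- a length-4 bit-level cycle in `Ω` can only be caused by a length-4
symbol-level cycle in the mother matrix `Λ`. -/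
theorem stmt_16 (M N K : ℕ) (Λ : Matrix (Fin M) (Fin N) (ZMod 2))
    (σ : Fin M → Fin N → Equiv.Perm (Fin K))
    (h : HasL4Cycle (blockOmega Λ σ)) :
    ∃ i1 i2 : Fin M, ∃ j1 j2 : Fin N, i1 ≠ i2 ∧ j1 ≠ j2 ∧
      Λ i1 j1 = 1 ∧ Λ i1 j2 = 1 ∧ Λ i2 j1 = 1 ∧ Λ i2 j2 = 1 := by
  obtain ⟨⟨i1, r1⟩, ⟨i2, r2⟩, ⟨j1, c1⟩, ⟨j2, c2⟩, hr, hc, h11, h12, h21, h22⟩ := h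
  simp only [blockOmega, Matrix.of_apply] at h11 h12 h21 h22
  have e11 : Λ i1 j1 = 1 ∧ σ i1 j1 r1 = c1 := by
    by_contra hcon; simp [hcon] at h11
  have e12 : Λ i1 j2 = 1 ∧ σ i1 j2 r1 = c2 := by
    by_contra hcon; simp [hcon] at h12
  have e21 : Λ i2 j1 = 1 ∧ σ i2 j1 r2 = c1 := by
    by_contra hcon; simp [hcon] at h21
  have e22 : Λ i2 j2 = 1 ∧ σ i2 j2 r2 = c2 := by
    by_contra hcon; simp [hcon] at h22
  refine ⟨i1, i2, j1, j2, ?_, ?_, e11.1, e12.1, e21.1, e22.1⟩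
  · rintro rfl
    have : r1 = r2 := (σ i1 j1).injective (e11.2.trans e21.2.symm)
    exact hr (by simp [this])
  · rintro rfl
    have : c1 = c2 := e11.2.symm.trans e12.2
    exact hc (by simp [this])
end

section
/- Let Λ be an M×N binary mother matrix and let Ω be a block matrix whose (i,j) block is a K×K permutation matrix whenever Λ(i,j) = 1 and the zero block whenever Λ(i,j) = 0. If the Tanner graph of Λ is acyclic (Λ is cycle-free, g_h = 0), then the Tanner graph of Ω is acyclic (Ω has no bit-level cycles, g_s = 0). -/
/-- The Tanner graph of a binary matrix `H`: row vertices `Sum.inl i` and column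
vertices `Sum.inr j` are adjacent iff `H i j = 1`; there are no adjacencies between
two row vertices or between two column vertices. -/
def TannerGraph {m n : Type*} (H : Matrix m n (ZMod 2)) : SimpleGraph (m ⊕ n) where
  Adj u v :=
    (∃ i j, u = Sum.inl i ∧ v = Sum.inr j ∧ H i j = 1) ∨
    (∃ i j, u = Sum.inr j ∧ v = Sum.inl i ∧ H i j = 1)
  symm := by
    constructor
    rintro u v (⟨i, j, rfl, rfl, h⟩ | ⟨i, j, rfl, rfl, h⟩)
    · exact Or.inr ⟨i, j, rfl, rfl, h⟩
    · exact Or.inl ⟨i, j, rfl, rfl, h⟩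
  loopless := by
    constructor
    rintro u (⟨i, j, rfl, huv, h⟩ | ⟨i, j, rfl, huv, h⟩) <;> simp at huv

section Aux

variable {M N K : ℕ} (Λ : Matrix (Fin M) (Fin N) (ZMod 2))
    (σ : Fin M → Fin N → Equiv.Perm (Fin K))

lemma blockOmega_eq_one_iff (rc : Fin M × Fin K) (cc : Fin N × Fin K) :
    blockOmega Λ σ rc cc = 1 ↔ (Λ rc.1 cc.1 = 1 ∧ σ rc.1 cc.1 rc.2 = cc.2) := by
  unfold blockOmega
  simp only [Matrix.of_apply]
  split
  · simp_all
  · simp_all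

def projHom : TannerGraph (blockOmega Λ σ) →g TannerGraph Λ where
  toFun := Sum.map Prod.fst Prod.fst
  map_rel' := by
    rintro a b (⟨x, y, rfl, rfl, hxy⟩ | ⟨x, y, rfl, rfl, hxy⟩)
    · exact Or.inl ⟨x.1, y.1, rfl, rfl, ((blockOmega_eq_one_iff Λ σ x y).mp hxy).1⟩
    · exact Or.inr ⟨x.1, y.1, rfl, rfl, ((blockOmega_eq_one_iff Λ σ x y).mp hxy).1⟩

lemma locInj {a b s : (Fin M × Fin K) ⊕ (Fin N × Fin K)}
    (hab : (TannerGraph (blockOmega Λ σ)).Adj a b)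
    (hsb : (TannerGraph (blockOmega Λ σ)).Adj s b)
    (hfs : Sum.map Prod.fst Prod.fst a = Sum.map (α := Fin M × Fin K) (α' := Fin M) (β := Fin N × Fin K) Prod.fst Prod.fst s) : a = s := by
  rcases hab with ⟨x, y, rfl, rfl, hxy⟩ | ⟨x, y, rfl, rfl, hxy⟩
  · rcases hsb with ⟨x', y', rfl, hy, hxy'⟩ | ⟨x', y', hs, hb, _⟩
    · injection hy with hy; subst hy
      obtain ⟨_, h1⟩ := (blockOmega_eq_one_iff Λ σ x y).mp hxy
      obtain ⟨_, h2⟩ := (blockOmega_eq_one_iff Λ σ x' y).mp hxy'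
      simp only [Sum.map_inl, Sum.inl.injEq] at hfs
      have hsnd : x.2 = x'.2 := (σ x.1 y.1).injective (by rw [h1, hfs]; exact h2.symm)
      rw [Prod.ext hfs hsnd]
    · simp at hb
  · rcases hsb with ⟨x', y', hs, hb, _⟩ | ⟨x', y', rfl, hx, hxy'⟩
    · simp at hb
    · injection hx with hx; subst hx
      obtain ⟨_, h1⟩ := (blockOmega_eq_one_iff Λ σ x y).mp hxy
      obtain ⟨_, h2⟩ := (blockOmega_eq_one_iff Λ σ x y').mp hxy'
      simp only [Sum.map_inr, Sum.inr.injEq] at hfs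
      have hsnd : y.2 = y'.2 := by rw [← h1, ← h2, hfs]
      rw [Prod.ext hfs hsnd]

lemma map_isPath (hu : ∀ ⦃v w : (Fin M) ⊕ (Fin N)⦄ (p q : (TannerGraph Λ).Path v w), p = q)
    {u v : (Fin M × Fin K) ⊕ (Fin N × Fin K)}
    (p : (TannerGraph (blockOmega Λ σ)).Walk u v) (hp : p.IsPath) :
    (p.map (projHom Λ σ)).IsPath := by
  induction p with
  | nil => simp
  | @cons u b v hadj p' ih =>
    rw [SimpleGraph.Walk.cons_isPath_iff] at hp
    obtain ⟨hp', hns⟩ := hp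
    have ihp := ih hp'
    rw [SimpleGraph.Walk.map_cons, SimpleGraph.Walk.cons_isPath_iff]
    refine ⟨ihp, ?_⟩
    intro hmem
    have adj' : (TannerGraph Λ).Adj (projHom Λ σ b) (projHom Λ σ u) :=
      ((projHom Λ σ).map_adj hadj).symm
    cases p' with
    | nil =>
      simp only [SimpleGraph.Walk.map_nil, SimpleGraph.Walk.support_nil, List.mem_singleton] at hmem
      exact adj'.ne hmem.symm
    | @cons b s v h2 p'' =>
      set F := projHom Λ σ
      have hw : ((SimpleGraph.Walk.cons h2 p'').map F).takeUntil (F u) hmem |>.IsPath :=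
        ihp.takeUntil hmem
      have heq := hu ⟨_, hw⟩ (SimpleGraph.Path.singleton adj')
      have heq' : ((SimpleGraph.Walk.cons h2 p'').map F).takeUntil (F u) hmem
          = SimpleGraph.Walk.cons adj' SimpleGraph.Walk.nil := congrArg Subtype.val heq
      have hspec := SimpleGraph.Walk.take_spec ((SimpleGraph.Walk.cons h2 p'').map F) hmem
      rw [heq'] at hspec
      -- hspec : cons adj' (rest) = (cons h2 p'').map F  (after append)
      have hsv : F s = F u := by
        have := congrArg (fun w => w.getVert 1) hspec
        simpa using this.symm
      have : u = s := locInj Λ σ hadj h2.symm hsv.symm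
      apply hns
      rw [this, SimpleGraph.Walk.support_cons]
      exact List.mem_cons_of_mem _ p''.start_mem_support

end Aux

/-- if the Tanner graph of the mother matrix `Λ` is acyclic, then so is
the Tanner graph of the block matrix `Ω`. -/
theorem stmt_18 (M N K : ℕ) (Λ : Matrix (Fin M) (Fin N) (ZMod 2))
    (σ : Fin M → Fin N → Equiv.Perm (Fin K))
    (h : (TannerGraph Λ).IsAcyclic) :
    (TannerGraph (blockOmega Λ σ)).IsAcyclic := by
  intro v c hc
  have hu := SimpleGraph.isAcyclic_iff_path_unique.mp h
  cases c with
  | nil => simp [SimpleGraph.Walk.isCycle_def] at hc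
  | @cons v b v hadj q =>
    obtain ⟨hq, -⟩ := (SimpleGraph.Walk.cons_isCycle_iff q hadj).mp hc
    have hmap := map_isPath Λ σ hu q hq
    have adj' : (TannerGraph Λ).Adj (projHom Λ σ b) (projHom Λ σ v) :=
      ((projHom Λ σ).map_adj hadj).symm
    have heq := hu ⟨_, hmap⟩ (SimpleGraph.Path.singleton adj')
    have hlen : (q.map (projHom Λ σ)).length = 1 := by
      have h' : q.map (projHom Λ σ) = SimpleGraph.Walk.cons adj' SimpleGraph.Walk.nil :=
        congrArg Subtype.val heq
      rw [h']; rfl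
    rw [SimpleGraph.Walk.length_map] at hlen
    have h3 := hc.three_le_length
    simp [hlen] at h3
end
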